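/- Let (u, φ, ψ, w) be a classical solution of the suspension-bridge Shear beam system in thermoelasticity of type III, let c_p > 0 be a Poincaré constant for (0,L), and define I₂(t) = ρ₃ ∫₀^L w_t w dx + (κ/2) ∫₀^L w_x² dx + β ∫₀^L φ_x w dx. Then for every t > 0, dI₂(t)/dt ≤ −δ ∫₀^L w_x² dx + (b/4) ∫₀^L ψ_x² dx + (K/4) ∫₀^L (φ_x+ψ)² dx + C₂ ∫₀^L w_{xt}² dx, where C₂ = ρ₃ c_p + β²c_p/K + β²c_p²/b. -/

import Mathlib

open MeasureTheory Set

noncomputable section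

/-- Partial derivative with respect to the time variable (second argument). -/
def pdt (f : ℝ → ℝ → ℝ) (x t : ℝ) : ℝ := deriv (fun s => f x s) t

/-- Partial derivative with respect to the space variable (first argument). -/
def pdx (f : ℝ → ℝ → ℝ) (x t : ℝ) : ℝ := deriv (fun y => f y t) x

/-- A classical solution of the suspension-bridge Shear beam system in
thermoelasticity of type III. -/
structure IsShearSolution (L ρ α lm μ ρ₁ K γ b ρ₃ δ κ β : ℝ)
    (u φ ψ w : ℝ → ℝ → ℝ) : Prop where
  smooth_u : ContDiff ℝ 3 (fun p : ℝ × ℝ => u p.1 p.2)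
  smooth_phi : ContDiff ℝ 3 (fun p : ℝ × ℝ => φ p.1 p.2)
  smooth_psi : ContDiff ℝ 3 (fun p : ℝ × ℝ => ψ p.1 p.2)
  smooth_w : ContDiff ℝ 3 (fun p : ℝ × ℝ => w p.1 p.2)
  eq1 : ∀ x ∈ Ioo (0:ℝ) L, ∀ t : ℝ, 0 < t →
    ρ * pdt (pdt u) x t - α * pdx (pdx u) x t - lm * (φ x t - u x t)
      + μ * pdt u x t = 0
  eq2 : ∀ x ∈ Ioo (0:ℝ) L, ∀ t : ℝ, 0 < t →
    ρ₁ * pdt (pdt φ) x t - K * pdx (fun y s => pdx φ y s + ψ y s) x t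
      + lm * (φ x t - u x t) + γ * pdt φ x t + β * pdx (pdt w) x t = 0
  eq3 : ∀ x ∈ Ioo (0:ℝ) L, ∀ t : ℝ, 0 < t →
    -b * pdx (pdx ψ) x t + K * (pdx φ x t + ψ x t) = 0
  eq4 : ∀ x ∈ Ioo (0:ℝ) L, ∀ t : ℝ, 0 < t →
    ρ₃ * pdt (pdt w) x t - δ * pdx (pdx w) x t + β * pdx (pdt φ) x t
      - κ * pdx (pdx (pdt w)) x t = 0
  bc : ∀ t : ℝ, 0 ≤ t →
    u 0 t = 0 ∧ u L t = 0 ∧ φ 0 t = 0 ∧ φ L t = 0 ∧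
    ψ 0 t = 0 ∧ ψ L t = 0 ∧ w 0 t = 0 ∧ w L t = 0

/-- The energy functional of the system. -/
def energy (L ρ α lm ρ₁ K b ρ₃ δ : ℝ) (u φ ψ w : ℝ → ℝ → ℝ) (t : ℝ) : ℝ :=
  (1/2) * ∫ x in (0:ℝ)..L,
    (ρ * (pdt u x t)^2 + α * (pdx u x t)^2 + lm * (φ x t - u x t)^2
      + ρ₁ * (pdt φ x t)^2 + K * (pdx φ x t + ψ x t)^2 + b * (pdx ψ x t)^2
      + ρ₃ * (pdt w x t)^2 + δ * (pdx w x t)^2)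

/-- The auxiliary functional I₁. -/
def I1 (L ρ μ ρ₁ γ : ℝ) (u φ : ℝ → ℝ → ℝ) (t : ℝ) : ℝ :=
  (∫ x in (0:ℝ)..L, (ρ * pdt u x t * u x t + μ / 2 * (u x t)^2))
    + ∫ x in (0:ℝ)..L, (ρ₁ * pdt φ x t * φ x t + γ / 2 * (φ x t)^2)

/-- The auxiliary functional I₂. -/
def I2 (L ρ₃ κ β : ℝ) (φ w : ℝ → ℝ → ℝ) (t : ℝ) : ℝ :=
  ρ₃ * (∫ x in (0:ℝ)..L, pdt w x t * w x t)
    + κ / 2 * (∫ x in (0:ℝ)..L, (pdx w x t)^2)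
    + β * ∫ x in (0:ℝ)..L, pdx φ x t * w x t

/-! ### Auxiliary lemmas -/

lemma hasDerivAt_slice_t {H : ℝ → ℝ → ℝ}
    (h : Differentiable ℝ (fun p : ℝ × ℝ => H p.1 p.2)) (x t : ℝ) :
    HasDerivAt (fun s => H x s) (pdt H x t) t := by
  have hd : DifferentiableAt ℝ (fun s => H x s) t :=
    (h (x, t)).comp t ((differentiableAt_const x).prodMk differentiableAt_id)
  exact hd.hasDerivAt

lemma hasDerivAt_slice_x {H : ℝ → ℝ → ℝ}
    (h : Differentiable ℝ (fun p : ℝ × ℝ => H p.1 p.2)) (x t : ℝ) :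
    HasDerivAt (fun y => H y t) (pdx H x t) x := by
  have hd : DifferentiableAt ℝ (fun y => H y t) x :=
    (h (x, t)).comp (g := fun p : ℝ × ℝ => H p.1 p.2) (f := fun y : ℝ => (y, t)) x
      (differentiableAt_id.prodMk (differentiableAt_const t))
  exact hd.hasDerivAt

lemma pdt_eq_fderiv {H : ℝ → ℝ → ℝ}
    (h : Differentiable ℝ (fun p : ℝ × ℝ => H p.1 p.2)) (x t : ℝ) :
    pdt H x t = fderiv ℝ (fun p : ℝ × ℝ => H p.1 p.2) (x, t) (0, 1) :=
  ((h (x, t)).hasFDerivAt.comp_hasDerivAt t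
      ((hasDerivAt_const t x).prodMk (hasDerivAt_id t))).deriv

lemma pdx_eq_fderiv {H : ℝ → ℝ → ℝ}
    (h : Differentiable ℝ (fun p : ℝ × ℝ => H p.1 p.2)) (x t : ℝ) :
    pdx H x t = fderiv ℝ (fun p : ℝ × ℝ => H p.1 p.2) (x, t) (1, 0) :=
  ((h (x, t)).hasFDerivAt.comp_hasDerivAt (l := fun p : ℝ × ℝ => H p.1 p.2)
      (f := fun y : ℝ => (y, t)) x
      ((hasDerivAt_id x).prodMk (hasDerivAt_const x t))).deriv

lemma contDiff_unc_pdt {H : ℝ → ℝ → ℝ} {n m : WithTop ℕ∞}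
    (h : ContDiff ℝ n (fun p : ℝ × ℝ => H p.1 p.2)) (hm : m + 1 ≤ n) :
    ContDiff ℝ m (fun p : ℝ × ℝ => pdt H p.1 p.2) := by
  have hd : Differentiable ℝ (fun p : ℝ × ℝ => H p.1 p.2) :=
    h.differentiable (lt_of_lt_of_le zero_lt_one (le_trans le_add_self hm)).ne'
  have he : (fun p : ℝ × ℝ => pdt H p.1 p.2)
      = fun p : ℝ × ℝ => fderiv ℝ (fun p : ℝ × ℝ => H p.1 p.2) p ((0 : ℝ), (1 : ℝ)) := by
    funext p
    rw [pdt_eq_fderiv hd]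
  rw [he]
  exact (ContinuousLinearMap.apply ℝ ℝ ((0 : ℝ), (1 : ℝ))).contDiff.comp (h.fderiv_right hm)

lemma contDiff_unc_pdx {H : ℝ → ℝ → ℝ} {n m : WithTop ℕ∞}
    (h : ContDiff ℝ n (fun p : ℝ × ℝ => H p.1 p.2)) (hm : m + 1 ≤ n) :
    ContDiff ℝ m (fun p : ℝ × ℝ => pdx H p.1 p.2) := by
  have hd : Differentiable ℝ (fun p : ℝ × ℝ => H p.1 p.2) :=
    h.differentiable (lt_of_lt_of_le zero_lt_one (le_trans le_add_self hm)).ne'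
  have he : (fun p : ℝ × ℝ => pdx H p.1 p.2)
      = fun p : ℝ × ℝ => fderiv ℝ (fun p : ℝ × ℝ => H p.1 p.2) p ((1 : ℝ), (0 : ℝ)) := by
    funext p
    rw [pdx_eq_fderiv hd]
  rw [he]
  exact (ContinuousLinearMap.apply ℝ ℝ ((1 : ℝ), (0 : ℝ))).contDiff.comp (h.fderiv_right hm)

lemma pdt_pdx_comm {H : ℝ → ℝ → ℝ}
    (h : ContDiff ℝ 2 (fun p : ℝ × ℝ => H p.1 p.2)) (x t : ℝ) :
    pdt (pdx H) x t = pdx (pdt H) x t := by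
  set U : ℝ × ℝ → ℝ := fun p => H p.1 p.2 with hU
  have hd : Differentiable ℝ U := h.differentiable (by norm_num)
  have h1 : ContDiff ℝ 1 (fderiv ℝ U) := h.fderiv_right (by norm_num)
  have hd1 : Differentiable ℝ (fderiv ℝ U) := h1.differentiable one_ne_zero
  have hsymm := second_derivative_symmetric (f := U) (f' := fderiv ℝ U)
    (f'' := fderiv ℝ (fderiv ℝ U) (x, t)) (fun y => (hd y).hasFDerivAt)
    (hd1 (x, t)).hasFDerivAt
  have ex : ∀ v : ℝ × ℝ, (fun p : ℝ × ℝ => fderiv ℝ U p v)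
      = (ContinuousLinearMap.apply ℝ ℝ v) ∘ (fderiv ℝ U) := fun v => rfl
  have key : ∀ v w : ℝ × ℝ,
      fderiv ℝ (fun p : ℝ × ℝ => fderiv ℝ U p v) (x, t) w
        = fderiv ℝ (fderiv ℝ U) (x, t) w v := by
    intro v w
    rw [ex v, fderiv_comp (x, t) (ContinuousLinearMap.apply ℝ ℝ v).differentiableAt
      (hd1 (x, t))]
    simp [ContinuousLinearMap.fderiv]
  have hux : Differentiable ℝ (fun p : ℝ × ℝ => pdx H p.1 p.2) := by
    have he : (fun p : ℝ × ℝ => pdx H p.1 p.2)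
        = fun p : ℝ × ℝ => fderiv ℝ U p ((1 : ℝ), (0 : ℝ)) := by
      funext p; rw [pdx_eq_fderiv hd]
    rw [he]
    exact fun p => ((ContinuousLinearMap.apply ℝ ℝ ((1:ℝ),(0:ℝ))).differentiableAt).comp p
      (hd1 p)
  have hut : Differentiable ℝ (fun p : ℝ × ℝ => pdt H p.1 p.2) := by
    have he : (fun p : ℝ × ℝ => pdt H p.1 p.2)
        = fun p : ℝ × ℝ => fderiv ℝ U p ((0 : ℝ), (1 : ℝ)) := by
      funext p; rw [pdt_eq_fderiv hd]
    rw [he]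
    exact fun p => ((ContinuousLinearMap.apply ℝ ℝ ((0:ℝ),(1:ℝ))).differentiableAt).comp p
      (hd1 p)
  have e1 : pdt (pdx H) x t
      = fderiv ℝ (fderiv ℝ U) (x, t) ((0:ℝ),(1:ℝ)) ((1:ℝ),(0:ℝ)) := by
    rw [pdt_eq_fderiv hux x t]
    have he : (fun p : ℝ × ℝ => pdx H p.1 p.2)
        = fun p : ℝ × ℝ => fderiv ℝ U p ((1 : ℝ), (0 : ℝ)) := by
      funext p; rw [pdx_eq_fderiv hd]
    rw [he, key]
  have e2 : pdx (pdt H) x t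
      = fderiv ℝ (fderiv ℝ U) (x, t) ((1:ℝ),(0:ℝ)) ((0:ℝ),(1:ℝ)) := by
    rw [pdx_eq_fderiv hut x t]
    have he : (fun p : ℝ × ℝ => pdt H p.1 p.2)
        = fun p : ℝ × ℝ => fderiv ℝ U p ((0 : ℝ), (1 : ℝ)) := by
      funext p; rw [pdt_eq_fderiv hd]
    rw [he, key]
  rw [e1, e2, hsymm]

lemma hasDerivAt_parametric {L : ℝ} {G G' : ℝ → ℝ → ℝ}
    (hG : Continuous (fun p : ℝ × ℝ => G p.1 p.2))
    (hG' : Continuous (fun p : ℝ × ℝ => G' p.1 p.2))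
    (hd : ∀ x t, HasDerivAt (fun s => G x s) (G' x t) t) (t₀ : ℝ) :
    HasDerivAt (fun t => ∫ x in (0:ℝ)..L, G x t) (∫ x in (0:ℝ)..L, G' x t₀) t₀ := by
  obtain ⟨C, hC⟩ := (isCompact_uIcc (a := (0:ℝ)) (b := L)).prod
    (isCompact_Icc (a := t₀ - 1) (b := t₀ + 1)) |>.exists_bound_of_continuousOn hG'.continuousOn
  refine (intervalIntegral.hasDerivAt_integral_of_dominated_loc_of_deriv_le
    (F := fun s x => G x s) (F' := fun s x => G' x s) (bound := fun _ => |C| )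
    (Metric.ball_mem_nhds t₀ one_pos) ?_ ?_ ?_ ?_ ?_ ?_).2
  · exact Filter.Eventually.of_forall fun s =>
      (hG.comp (continuous_id.prodMk continuous_const)).aestronglyMeasurable
  · exact (hG.comp (continuous_id.prodMk continuous_const)).intervalIntegrable _ _
  · exact (hG'.comp (continuous_id.prodMk continuous_const)).aestronglyMeasurable
  · refine Filter.Eventually.of_forall fun x hx s hs => ?_
    have hx' : x ∈ uIcc (0:ℝ) L := Ioc_subset_Icc_self hx
    have hs' : s ∈ Icc (t₀ - 1) (t₀ + 1) := by
      rw [Real.ball_eq_Ioo] at hs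
      exact Ioo_subset_Icc_self hs
    have := hC ((x, s)) (mk_mem_prod hx' hs')
    calc ‖G' x s‖ ≤ C := by simpa using this
    _ ≤ |C| := le_abs_self C
  · exact intervalIntegrable_const
  · exact Filter.Eventually.of_forall fun x _ s _ => hd x s

lemma young_int {L c ε : ℝ} (hL : 0 ≤ L) (hε : 0 < ε) {f g : ℝ → ℝ}
    (hf : Continuous f) (hg : Continuous g) :
    c * ∫ x in (0:ℝ)..L, f x * g x
      ≤ ε * (∫ x in (0:ℝ)..L, (f x)^2) + c^2/(4*ε) * ∫ x in (0:ℝ)..L, (g x)^2 := by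
  have h1 : (∫ x in (0:ℝ)..L, c * (f x * g x))
      ≤ ∫ x in (0:ℝ)..L, (ε * (f x)^2 + c^2/(4*ε) * (g x)^2) := by
    apply intervalIntegral.integral_mono_on hL
    · exact (continuous_const.mul (hf.mul hg)).intervalIntegrable _ _
    · exact ((continuous_const.mul (hf.pow 2)).add
        (continuous_const.mul (hg.pow 2))).intervalIntegrable _ _
    · intro x _
      rw [← sub_nonneg]
      have h4 : ε * (f x) ^ 2 + c ^ 2 / (4 * ε) * (g x) ^ 2 - c * (f x * g x)
          = (2*ε*f x - c*g x)^2 / (4*ε) := by field_simp; ring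
      rw [h4]
      positivity
  rw [intervalIntegral.integral_const_mul] at h1
  rwa [intervalIntegral.integral_add (f := fun x => ε * f x ^ 2) (g := fun x => c^2/(4*ε) * g x ^ 2)
      ((continuous_const.mul (hf.pow 2)).intervalIntegrable _ _)
      ((continuous_const.mul (hg.pow 2)).intervalIntegrable _ _),
    intervalIntegral.integral_const_mul, intervalIntegral.integral_const_mul] at h1
/-- derivative estimate for the functional I₂. -/
theorem I2_derivative_estimate
    {L ρ α lm μ ρ₁ K γ b ρ₃ δ κ β c_p : ℝ}
    (hL : 0 < L) (hρ : 0 < ρ) (hα : 0 < α) (hlm : 0 < lm) (hμ : 0 < μ)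
    (hρ₁ : 0 < ρ₁) (hK : 0 < K) (hγ : 0 < γ) (hb : 0 < b) (hρ₃ : 0 < ρ₃)
    (hδ : 0 < δ) (hκ : 0 < κ) (hβ : β ≠ 0) (hcp : 0 < c_p)
    (hpoin : ∀ f : ℝ → ℝ, ContDiff ℝ 1 f → f 0 = 0 → f L = 0 →
      (∫ x in (0:ℝ)..L, (f x)^2) ≤ c_p * ∫ x in (0:ℝ)..L, (deriv f x)^2)
    {u φ ψ w : ℝ → ℝ → ℝ}
    (hsol : IsShearSolution L ρ α lm μ ρ₁ K γ b ρ₃ δ κ β u φ ψ w) :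
    ∀ t : ℝ, 0 < t →
      ∃ d : ℝ, HasDerivAt (I2 L ρ₃ κ β φ w) d t ∧
        d ≤ -(δ * ∫ x in (0:ℝ)..L, (pdx w x t)^2)
          + b / 4 * (∫ x in (0:ℝ)..L, (pdx ψ x t)^2)
          + K / 4 * (∫ x in (0:ℝ)..L, (pdx φ x t + ψ x t)^2)
          + (ρ₃ * c_p + β^2 * c_p / K + β^2 * c_p^2 / b)
              * (∫ x in (0:ℝ)..L, (pdx (pdt w) x t)^2) := by
  intro t ht
  -- smoothness facts
  have hw3 := hsol.smooth_w
  have hφ3 := hsol.smooth_phi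
  have hψ3 := hsol.smooth_psi
  have hwt2 : ContDiff ℝ 2 (fun p : ℝ × ℝ => pdt w p.1 p.2) :=
    contDiff_unc_pdt hw3 (by norm_num)
  have hwx2 : ContDiff ℝ 2 (fun p : ℝ × ℝ => pdx w p.1 p.2) :=
    contDiff_unc_pdx hw3 (by norm_num)
  have hφt2 : ContDiff ℝ 2 (fun p : ℝ × ℝ => pdt φ p.1 p.2) :=
    contDiff_unc_pdt hφ3 (by norm_num)
  have hφx2 : ContDiff ℝ 2 (fun p : ℝ × ℝ => pdx φ p.1 p.2) :=
    contDiff_unc_pdx hφ3 (by norm_num)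
  have hψx2 : ContDiff ℝ 2 (fun p : ℝ × ℝ => pdx ψ p.1 p.2) :=
    contDiff_unc_pdx hψ3 (by norm_num)
  have hwtt1 : ContDiff ℝ 1 (fun p : ℝ × ℝ => pdt (pdt w) p.1 p.2) :=
    contDiff_unc_pdt hwt2 (by norm_num)
  have hwxt1 : ContDiff ℝ 1 (fun p : ℝ × ℝ => pdx (pdt w) p.1 p.2) :=
    contDiff_unc_pdx hwt2 (by norm_num)
  have hwtx1 : ContDiff ℝ 1 (fun p : ℝ × ℝ => pdt (pdx w) p.1 p.2) :=
    contDiff_unc_pdt hwx2 (by norm_num)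
  have hwxx1 : ContDiff ℝ 1 (fun p : ℝ × ℝ => pdx (pdx w) p.1 p.2) :=
    contDiff_unc_pdx hwx2 (by norm_num)
  have hφxt1 : ContDiff ℝ 1 (fun p : ℝ × ℝ => pdx (pdt φ) p.1 p.2) :=
    contDiff_unc_pdx hφt2 (by norm_num)
  have hφtx1 : ContDiff ℝ 1 (fun p : ℝ × ℝ => pdt (pdx φ) p.1 p.2) :=
    contDiff_unc_pdt hφx2 (by norm_num)
  have hwxxt0 : Continuous (fun p : ℝ × ℝ => pdx (pdx (pdt w)) p.1 p.2) :=
    (contDiff_unc_pdx (m := 0) hwxt1 (by norm_num)).continuous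
  -- differentiability
  have dw : Differentiable ℝ (fun p : ℝ × ℝ => w p.1 p.2) := hw3.differentiable (by norm_num)
  have dwt := hwt2.differentiable (by norm_num : (2 : WithTop ℕ∞) ≠ 0)
  have dwx := hwx2.differentiable (by norm_num : (2 : WithTop ℕ∞) ≠ 0)
  have dφx := hφx2.differentiable (by norm_num : (2 : WithTop ℕ∞) ≠ 0)
  have dwxt := hwxt1.differentiable one_ne_zero
  -- symmetry of mixed partials
  have symw : ∀ x s : ℝ, pdt (pdx w) x s = pdx (pdt w) x s :=
    pdt_pdx_comm (hw3.of_le (by norm_num))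
  have symφ : ∀ x s : ℝ, pdt (pdx φ) x s = pdx (pdt φ) x s :=
    pdt_pdx_comm (hφ3.of_le (by norm_num))
  -- slice continuity at time t
  have cw : Continuous (fun x => w x t) :=
    hw3.continuous.comp (continuous_id.prodMk continuous_const)
  have cwt : Continuous (fun x => pdt w x t) :=
    hwt2.continuous.comp (continuous_id.prodMk continuous_const)
  have cwx : Continuous (fun x => pdx w x t) :=
    hwx2.continuous.comp (continuous_id.prodMk continuous_const)
  have cwxt : Continuous (fun x => pdx (pdt w) x t) :=
    hwxt1.continuous.comp (continuous_id.prodMk continuous_const)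
  have cwxx : Continuous (fun x => pdx (pdx w) x t) :=
    hwxx1.continuous.comp (continuous_id.prodMk continuous_const)
  have cwxxt : Continuous (fun x => pdx (pdx (pdt w)) x t) :=
    hwxxt0.comp (continuous_id.prodMk continuous_const)
  have cφx : Continuous (fun x => pdx φ x t) :=
    hφx2.continuous.comp (continuous_id.prodMk continuous_const)
  have cφxt : Continuous (fun x => pdx (pdt φ) x t) :=
    hφxt1.continuous.comp (continuous_id.prodMk continuous_const)
  have cψ : Continuous (fun x => ψ x t) :=
    hψ3.continuous.comp (continuous_id.prodMk continuous_const)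
  have cψx : Continuous (fun x => pdx ψ x t) :=
    hψx2.continuous.comp (continuous_id.prodMk continuous_const)
  have intg : ∀ {f : ℝ → ℝ}, Continuous f → IntervalIntegrable f volume 0 L :=
    fun hf => hf.intervalIntegrable _ _
  -- derivatives of the three integral terms
  have D1 : HasDerivAt (fun τ => ∫ x in (0:ℝ)..L, pdt w x τ * w x τ)
      (∫ x in (0:ℝ)..L, (pdt (pdt w) x t * w x t + pdt w x t * pdt w x t)) t :=
    hasDerivAt_parametric (G := fun x s => pdt w x s * w x s)
      (G' := fun x s => pdt (pdt w) x s * w x s + pdt w x s * pdt w x s)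
      (hwt2.continuous.mul hw3.continuous)
      ((hwtt1.continuous.mul hw3.continuous).add (hwt2.continuous.mul hwt2.continuous))
      (fun x s => (hasDerivAt_slice_t dwt x s).mul (hasDerivAt_slice_t dw x s)) t
  have D2 : HasDerivAt (fun τ => ∫ x in (0:ℝ)..L, (pdx w x τ)^2)
      (∫ x in (0:ℝ)..L, (pdt (pdx w) x t * pdx w x t + pdx w x t * pdt (pdx w) x t)) t :=
    hasDerivAt_parametric (G := fun x s => (pdx w x s)^2)
      (G' := fun x s => pdt (pdx w) x s * pdx w x s + pdx w x s * pdt (pdx w) x s)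
      (hwx2.continuous.pow 2)
      ((hwtx1.continuous.mul hwx2.continuous).add (hwx2.continuous.mul hwtx1.continuous))
      (fun x s => by
        have h0 := (hasDerivAt_slice_t dwx x s).mul (hasDerivAt_slice_t dwx x s)
        simp only [pow_two]; exact h0) t
  have D3 : HasDerivAt (fun τ => ∫ x in (0:ℝ)..L, pdx φ x τ * w x τ)
      (∫ x in (0:ℝ)..L, (pdt (pdx φ) x t * w x t + pdx φ x t * pdt w x t)) t :=
    hasDerivAt_parametric (G := fun x s => pdx φ x s * w x s)
      (G' := fun x s => pdt (pdx φ) x s * w x s + pdx φ x s * pdt w x s)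
      (hφx2.continuous.mul hw3.continuous)
      ((hφtx1.continuous.mul hw3.continuous).add (hφx2.continuous.mul hwt2.continuous))
      (fun x s => (hasDerivAt_slice_t (hφx2.differentiable (by norm_num)) x s).mul
        (hasDerivAt_slice_t dw x s)) t
  -- rewrite mixed partials
  have D2' : HasDerivAt (fun τ => ∫ x in (0:ℝ)..L, (pdx w x τ)^2)
      (∫ x in (0:ℝ)..L, (pdx (pdt w) x t * pdx w x t + pdx w x t * pdx (pdt w) x t)) t := by
    simpa only [symw] using D2
  have D3' : HasDerivAt (fun τ => ∫ x in (0:ℝ)..L, pdx φ x τ * w x τ)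
      (∫ x in (0:ℝ)..L, (pdx (pdt φ) x t * w x t + pdx φ x t * pdt w x t)) t := by
    simpa only [symφ] using D3
  have DI : HasDerivAt (I2 L ρ₃ κ β φ w)
      (ρ₃ * (∫ x in (0:ℝ)..L, (pdt (pdt w) x t * w x t + pdt w x t * pdt w x t))
        + κ / 2 * (∫ x in (0:ℝ)..L,
            (pdx (pdt w) x t * pdx w x t + pdx w x t * pdx (pdt w) x t))
        + β * (∫ x in (0:ℝ)..L, (pdx (pdt φ) x t * w x t + pdx φ x t * pdt w x t))) t := by
    unfold I2
    exact ((D1.const_mul ρ₃).add (D2'.const_mul (κ/2))).add (D3'.const_mul β)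
  refine ⟨_, DI, ?_⟩
  -- boundary values
  obtain ⟨_, _, _, _, hψ0, hψL, hw0, hwL⟩ := hsol.bc t ht.le
  have hwt0 : pdt w 0 t = 0 := by
    have hev : (fun s => w 0 s) =ᶠ[nhds t] (fun _ => (0:ℝ)) := by
      filter_upwards [Ioi_mem_nhds ht] with s hs
      exact (hsol.bc s (le_of_lt hs)).2.2.2.2.2.2.1
    show deriv (fun s => w 0 s) t = 0
    rw [hev.deriv_eq, deriv_const]
  have hwtL : pdt w L t = 0 := by
    have hev : (fun s => w L s) =ᶠ[nhds t] (fun _ => (0:ℝ)) := by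
      filter_upwards [Ioi_mem_nhds ht] with s hs
      exact (hsol.bc s (le_of_lt hs)).2.2.2.2.2.2.2
    show deriv (fun s => w L s) t = 0
    rw [hev.deriv_eq, deriv_const]
  -- substitute equation (iv) in the first integral
  have key1 : ρ₃ * (∫ x in (0:ℝ)..L, (pdt (pdt w) x t * w x t + pdt w x t * pdt w x t))
      = δ * (∫ x in (0:ℝ)..L, pdx (pdx w) x t * w x t)
        + κ * (∫ x in (0:ℝ)..L, pdx (pdx (pdt w)) x t * w x t)
        - β * (∫ x in (0:ℝ)..L, pdx (pdt φ) x t * w x t)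
        + ρ₃ * (∫ x in (0:ℝ)..L, (pdt w x t)^2) := by
    have i1 : IntervalIntegrable (fun x => δ * (pdx (pdx w) x t * w x t)) volume 0 L :=
      intg (continuous_const.mul (cwxx.mul cw))
    have i2 : IntervalIntegrable (fun x => κ * (pdx (pdx (pdt w)) x t * w x t)) volume 0 L :=
      intg (continuous_const.mul (cwxxt.mul cw))
    have i3 : IntervalIntegrable (fun x => β * (pdx (pdt φ) x t * w x t)) volume 0 L :=
      intg (continuous_const.mul (cφxt.mul cw))
    have i4 : IntervalIntegrable (fun x => ρ₃ * (pdt w x t)^2) volume 0 L :=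
      intg (continuous_const.mul (cwt.pow 2))
    have hcong : (∫ x in (0:ℝ)..L,
        ρ₃ * (pdt (pdt w) x t * w x t + pdt w x t * pdt w x t))
        = ∫ x in (0:ℝ)..L,
          (δ * (pdx (pdx w) x t * w x t) + κ * (pdx (pdx (pdt w)) x t * w x t)
            - β * (pdx (pdt φ) x t * w x t) + ρ₃ * (pdt w x t)^2) := by
      apply intervalIntegral.integral_congr_ae
      have hae : ∀ᵐ x : ℝ, x ≠ L := by
        rw [ae_iff]
        have hset : {x : ℝ | ¬ x ≠ L} = {L} := by ext y; simp
        rw [hset]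
        exact measure_singleton L
      filter_upwards [hae] with x hx hxI
      have hxo : x ∈ Ioo (0:ℝ) L := by
        rw [uIoc_of_le hL.le] at hxI
        exact ⟨hxI.1, lt_of_le_of_ne hxI.2 hx⟩
      have h4 := hsol.eq4 x hxo t ht
      linear_combination (w x t) * h4
    rw [← intervalIntegral.integral_const_mul, hcong,
      intervalIntegral.integral_add ((i1.add i2).sub i3) i4,
      intervalIntegral.integral_sub (i1.add i2) i3,
      intervalIntegral.integral_add i1 i2,
      intervalIntegral.integral_const_mul, intervalIntegral.integral_const_mul,
      intervalIntegral.integral_const_mul, intervalIntegral.integral_const_mul]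
  -- the κ/2 term
  have key2 : κ/2 * (∫ x in (0:ℝ)..L,
      (pdx (pdt w) x t * pdx w x t + pdx w x t * pdx (pdt w) x t))
      = κ * (∫ x in (0:ℝ)..L, pdx (pdt w) x t * pdx w x t) := by
    rw [show (fun x => pdx (pdt w) x t * pdx w x t + pdx w x t * pdx (pdt w) x t)
        = fun x => 2 * (pdx (pdt w) x t * pdx w x t) from funext fun x => by ring,
      intervalIntegral.integral_const_mul]
    ring
  -- the β term
  have key3 : β * (∫ x in (0:ℝ)..L, (pdx (pdt φ) x t * w x t + pdx φ x t * pdt w x t))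
      = β * (∫ x in (0:ℝ)..L, pdx (pdt φ) x t * w x t)
        + β * (∫ x in (0:ℝ)..L, pdx φ x t * pdt w x t) := by
    rw [intervalIntegral.integral_add (f := fun x => pdx (pdt φ) x t * w x t)
      (g := fun x => pdx φ x t * pdt w x t) (intg (cφxt.mul cw)) (intg (cφx.mul cwt))]
    ring
  -- integration by parts
  have ibp1 : (∫ x in (0:ℝ)..L, pdx (pdx w) x t * w x t)
      = -(∫ x in (0:ℝ)..L, (pdx w x t)^2) := by
    have h := intervalIntegral.integral_deriv_mul_eq_sub_of_hasDerivAt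
      (u := fun y => pdx w y t) (v := fun y => w y t)
      (u' := fun y => pdx (pdx w) y t) (v' := fun y => pdx w y t)
      cwx.continuousOn cw.continuousOn
      (fun x _ => hasDerivAt_slice_x dwx x t) (fun x _ => hasDerivAt_slice_x dw x t)
      (intg cwxx) (intg cwx)
    simp only [hw0, hwL, mul_zero, sub_zero] at h
    rw [intervalIntegral.integral_add (f := fun x => pdx (pdx w) x t * w x t)
      (g := fun x => pdx w x t * pdx w x t) (intg (cwxx.mul cw)) (intg (cwx.mul cwx)),
      show (fun x => pdx w x t * pdx w x t) = fun x => (pdx w x t)^2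
        from funext fun x => (pow_two _).symm] at h
    linarith [h]
  have ibp2 : (∫ x in (0:ℝ)..L, pdx (pdx (pdt w)) x t * w x t)
      = -(∫ x in (0:ℝ)..L, pdx (pdt w) x t * pdx w x t) := by
    have h := intervalIntegral.integral_deriv_mul_eq_sub_of_hasDerivAt
      (u := fun y => pdx (pdt w) y t) (v := fun y => w y t)
      (u' := fun y => pdx (pdx (pdt w)) y t) (v' := fun y => pdx w y t)
      cwxt.continuousOn cw.continuousOn
      (fun x _ => hasDerivAt_slice_x dwxt x t) (fun x _ => hasDerivAt_slice_x dw x t)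
      (intg cwxxt) (intg cwx)
    simp only [hw0, hwL, mul_zero, sub_zero] at h
    rw [intervalIntegral.integral_add (f := fun x => pdx (pdx (pdt w)) x t * w x t)
      (g := fun x => pdx (pdt w) x t * pdx w x t) (intg (cwxxt.mul cw)) (intg (cwxt.mul cwx))] at h
    linarith [h]
  -- Poincaré estimates
  have hpw : ContDiff ℝ 1 (fun x => pdt w x t) :=
    (hwt2.of_le (by norm_num)).comp (contDiff_id.prodMk contDiff_const)
  have hp1 : (∫ x in (0:ℝ)..L, (pdt w x t)^2)
      ≤ c_p * ∫ x in (0:ℝ)..L, (pdx (pdt w) x t)^2 := by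
    have h := hpoin (fun x => pdt w x t) hpw hwt0 hwtL
    simpa [pdx] using h
  have hpψ : ContDiff ℝ 1 (fun x => ψ x t) :=
    (hψ3.of_le (by norm_num)).comp (contDiff_id.prodMk contDiff_const)
  have hp2 : (∫ x in (0:ℝ)..L, (ψ x t)^2)
      ≤ c_p * ∫ x in (0:ℝ)..L, (pdx ψ x t)^2 := by
    have h := hpoin (fun x => ψ x t) hpψ hψ0 hψL
    simpa [pdx] using h
  -- Young estimates
  have y1 : β * (∫ x in (0:ℝ)..L, (pdx φ x t + ψ x t) * pdt w x t)
      ≤ K/4 * (∫ x in (0:ℝ)..L, (pdx φ x t + ψ x t)^2)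
        + β^2/K * ∫ x in (0:ℝ)..L, (pdt w x t)^2 := by
    have h := young_int (c := β) (ε := K/4) hL.le (by positivity) (cφx.add cψ) cwt
    have e : β^2/(4*(K/4)) = β^2/K := by
      rw [show (4:ℝ)*(K/4) = K from by ring]
    rw [e] at h
    exact h
  have y2 : (-β) * (∫ x in (0:ℝ)..L, ψ x t * pdt w x t)
      ≤ b/(4*c_p) * (∫ x in (0:ℝ)..L, (ψ x t)^2)
        + β^2*c_p/b * ∫ x in (0:ℝ)..L, (pdt w x t)^2 := by
    have h := young_int (c := -β) (ε := b/(4*c_p)) hL.le (by positivity) cψ cwt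
    have e : (-β)^2/(4*(b/(4*c_p))) = β^2*c_p/b := by
      field_simp
    rw [e] at h
    exact h
  -- splitting the mixed term
  have hsplit : β * (∫ x in (0:ℝ)..L, (pdx φ x t + ψ x t) * pdt w x t)
      = β * (∫ x in (0:ℝ)..L, pdx φ x t * pdt w x t)
        + β * (∫ x in (0:ℝ)..L, ψ x t * pdt w x t) := by
    rw [show (fun x => (pdx φ x t + ψ x t) * pdt w x t)
        = fun x => pdx φ x t * pdt w x t + ψ x t * pdt w x t from funext fun x => by ring,
      intervalIntegral.integral_add (f := fun x => pdx φ x t * pdt w x t)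
        (g := fun x => ψ x t * pdt w x t) (intg (cφx.mul cwt)) (intg (cψ.mul cwt))]
    ring
  -- auxiliary multiplications
  have ibp1' : δ * (∫ x in (0:ℝ)..L, pdx (pdx w) x t * w x t)
      = -(δ * ∫ x in (0:ℝ)..L, (pdx w x t)^2) := by rw [ibp1]; ring
  have ibp2' : κ * (∫ x in (0:ℝ)..L, pdx (pdx (pdt w)) x t * w x t)
      = -(κ * ∫ x in (0:ℝ)..L, pdx (pdt w) x t * pdx w x t) := by rw [ibp2]; ring
  have B1 : ρ₃ * (∫ x in (0:ℝ)..L, (pdt w x t)^2)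
      ≤ ρ₃ * (c_p * ∫ x in (0:ℝ)..L, (pdx (pdt w) x t)^2) :=
    mul_le_mul_of_nonneg_left hp1 hρ₃.le
  have B2 : β^2/K * (∫ x in (0:ℝ)..L, (pdt w x t)^2)
      ≤ β^2/K * (c_p * ∫ x in (0:ℝ)..L, (pdx (pdt w) x t)^2) :=
    mul_le_mul_of_nonneg_left hp1 (by positivity)
  have B3 : β^2*c_p/b * (∫ x in (0:ℝ)..L, (pdt w x t)^2)
      ≤ β^2*c_p/b * (c_p * ∫ x in (0:ℝ)..L, (pdx (pdt w) x t)^2) :=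
    mul_le_mul_of_nonneg_left hp1 (by positivity)
  have B4 : b/(4*c_p) * (∫ x in (0:ℝ)..L, (ψ x t)^2)
      ≤ b/4 * ∫ x in (0:ℝ)..L, (pdx ψ x t)^2 := by
    have h := mul_le_mul_of_nonneg_left hp2 (show (0:ℝ) ≤ b/(4*c_p) by positivity)
    have e : b/(4*c_p) * (c_p * ∫ x in (0:ℝ)..L, (pdx ψ x t)^2)
        = b/4 * ∫ x in (0:ℝ)..L, (pdx ψ x t)^2 := by
      field_simp
    linarith [h, e.le, e.ge]
  have eexp : (ρ₃ * c_p + β^2 * c_p / K + β^2 * c_p^2 / b)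
      * (∫ x in (0:ℝ)..L, (pdx (pdt w) x t)^2)
      = ρ₃ * (c_p * ∫ x in (0:ℝ)..L, (pdx (pdt w) x t)^2)
        + β^2/K * (c_p * ∫ x in (0:ℝ)..L, (pdx (pdt w) x t)^2)
        + β^2*c_p/b * (c_p * ∫ x in (0:ℝ)..L, (pdx (pdt w) x t)^2) := by ring
  linarith [key1, key2, key3, ibp1', ibp2', hsplit, y1, y2, B1, B2, B3, B4, eexp]
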